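/- Let H be a complete real inner product space, X ⊆ H a nonempty closed convex set with orthogonal projection P_X, and φ : H → ℝ a convex differentiable function. Let u ∈ H, ε > 0, and set u' = P_X(u − ε ∇φ(u)). Then for every x ∈ X: φ(u) − φ(x) ≤ (1/(2ε)) (‖u − x‖² − ‖u' − x‖²) + (ε/2) ‖∇φ(u)‖². -/

import Mathlib

open InnerProductSpace

/-- First-order condition for a convex differentiable function:
`φ u - φ x ≤ ⟪∇φ u, u - x⟫`. -/
lemma gradient_ineq_aux {H : Type*} [NormedAddCommGroup H] [InnerProductSpace ℝ H]
    [CompleteSpace H] (φ : H → ℝ) (hφconv : ConvexOn ℝ Set.univ φ)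
    (hφdiff : Differentiable ℝ φ) (u x : H) :
    φ u - φ x ≤ inner ℝ (gradient φ u) (u - x) := by
  rcases eq_or_ne x u with rfl | hne
  · simp
  set g : ℝ → H := fun t => u + t • (x - u) with hg
  set f : ℝ → ℝ := fun t => φ (g t) with hf
  have hfconv : ConvexOn ℝ Set.univ f := by
    have : f = φ ∘ (AffineMap.lineMap u x : ℝ →ᵃ[ℝ] H) := by
      funext t
      simp [hf, hg, AffineMap.lineMap_apply]
      rw [smul_sub]
      abel
    rw [this]
    have := hφconv.comp_affineMap (AffineMap.lineMap u x : ℝ →ᵃ[ℝ] H)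
    simpa using this
  have hderiv : HasDerivAt f (inner ℝ (gradient φ u) (x - u)) 0 := by
    have hgd : HasDerivAt g (x - u) 0 := by
      have : HasDerivAt (fun t : ℝ => t • (x - u)) (x - u) 0 := by
        simpa using (hasDerivAt_id (0:ℝ)).smul_const (x - u)
      simpa [hg] using this.const_add u
    have hφg : HasFDerivAt φ (toDual ℝ H (gradient φ u)) (g 0) := by
      have := (hφdiff (g 0)).hasGradientAt.hasFDerivAt
      simp only [hg, zero_smul, add_zero] at this ⊢
      exact this
    have := hφg.comp_hasDerivAt 0 hgd
    convert this using 1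
    · rfl
    · rfl
    · rfl
    · simp [toDual_apply_apply]
  have hslope := hfconv.le_slope_of_hasDerivAt (Set.mem_univ (0:ℝ))
    (Set.mem_univ (1:ℝ)) one_pos hderiv
  have h01 : slope f 0 1 = f 1 - f 0 := by simp [slope_def_field]
  rw [h01] at hslope
  have hf0 : f 0 = φ u := by simp [hf, hg]
  have hf1 : f 1 = φ x := by simp [hf, hg]
  rw [hf0, hf1] at hslope
  have : inner ℝ (gradient φ u) (u - x) = -(inner ℝ (gradient φ u) (x - u) : ℝ) := by
    rw [← inner_neg_right]; congr 1; abel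
  rw [this]
  linarith

/-- The primal descent inequality (equation (23) in the proof of Lemma 2 of the paper):
with `P` the orthogonal (metric) projection onto the nonempty closed convex set `X`,
`φ` convex differentiable, and `u' = P (u - ε ∇φ(u))`, for every `x ∈ X`,
`φ(u) - φ(x) ≤ (1/(2ε)) (‖u - x‖² - ‖u' - x‖²) + (ε/2) ‖∇φ(u)‖²`. -/
theorem stmt3 {H : Type*} [NormedAddCommGroup H] [InnerProductSpace ℝ H]
    [CompleteSpace H]
    (X : Set H) (hXne : X.Nonempty) (hXcl : IsClosed X) (hXconv : Convex ℝ X)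
    (P : H → H) (hP : ∀ y : H, P y ∈ X ∧ ∀ w ∈ X, ‖y - P y‖ ≤ ‖y - w‖)
    (φ : H → ℝ) (hφconv : ConvexOn ℝ Set.univ φ) (hφdiff : Differentiable ℝ φ)
    (u : H) (ε : ℝ) (hε : 0 < ε) (u' : H) (hu' : u' = P (u - ε • gradient φ u)) :
    ∀ x ∈ X, φ u - φ x ≤
      (1 / (2 * ε)) * (‖u - x‖ ^ 2 - ‖u' - x‖ ^ 2) +
        (ε / 2) * ‖gradient φ u‖ ^ 2 := by
  intro x hx
  set g := gradient φ u with hgdef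
  set y := u - ε • g with hy
  have hu'X : u' ∈ X := hu' ▸ (hP y).1
  -- projection characterization
  have hinf : ‖y - u'‖ = ⨅ w : X, ‖y - w‖ := by
    haveI : Nonempty X := hXne.to_subtype
    apply le_antisymm
    · exact le_ciInf fun ⟨w, hw⟩ => by simpa using hu' ▸ (hP y).2 w hw
    · have hbdd : BddBelow (Set.range fun w : X => ‖y - (w : H)‖) :=
        ⟨0, by rintro r ⟨w, rfl⟩; exact norm_nonneg _⟩
      exact ciInf_le hbdd ⟨u', hu'X⟩
  have hproj : ∀ w ∈ X, (inner ℝ (y - u') (w - u') : ℝ) ≤ 0 :=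
    (norm_eq_iInf_iff_real_inner_le_zero hXconv hu'X).1 hinf
  have hobt : (inner ℝ (y - u') (x - u') : ℝ) ≤ 0 := hproj x hx
  -- ‖u' - x‖² ≤ ‖y - x‖²
  have hle : ‖u' - x‖ ^ 2 ≤ ‖y - x‖ ^ 2 := by
    have hexp : ‖y - x‖ ^ 2 =
        ‖y - u'‖ ^ 2 - 2 * inner ℝ (y - u') (x - u') + ‖x - u'‖ ^ 2 := by
      have := @norm_sub_sq_real H _ _ (y - u') (x - u')
      have heq : (y - u') - (x - u') = y - x := by abel
      rw [heq] at this
      linarith [this]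
    have hn2 : ‖x - u'‖ ^ 2 = ‖u' - x‖ ^ 2 := by rw [norm_sub_rev]
    nlinarith [sq_nonneg ‖y - u'‖]
  -- expansion of ‖y - x‖²
  have hexp2 : ‖y - x‖ ^ 2 =
      ‖u - x‖ ^ 2 - 2 * ε * inner ℝ g (u - x) + ε ^ 2 * ‖g‖ ^ 2 := by
    have heq : y - x = (u - x) - ε • g := by rw [hy]; abel
    rw [heq, @norm_sub_sq_real H _ _ (u - x) (ε • g)]
    rw [real_inner_smul_right, norm_smul, real_inner_comm]
    simp [abs_of_pos hε, mul_pow]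
    ring
  have hgrad : φ u - φ x ≤ inner ℝ g (u - x) :=
    gradient_ineq_aux φ hφconv hφdiff u x
  have key : inner ℝ g (u - x) ≤
      (1 / (2 * ε)) * (‖u - x‖ ^ 2 - ‖u' - x‖ ^ 2) + (ε / 2) * ‖g‖ ^ 2 := by
    have h1 : inner ℝ g (u - x) =
        (1 / (2 * ε)) * (‖u - x‖ ^ 2 - ‖y - x‖ ^ 2) + (ε / 2) * ‖g‖ ^ 2 := by
      rw [hexp2]; field_simp; ring
    rw [h1]
    have : (1 / (2 * ε)) * (‖u - x‖ ^ 2 - ‖y - x‖ ^ 2) ≤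
        (1 / (2 * ε)) * (‖u - x‖ ^ 2 - ‖u' - x‖ ^ 2) := by
      apply mul_le_mul_of_nonneg_left (by linarith) (by positivity)
    linarith
  linarith
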